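/- Let Λ₁ = ℕ₀ and Λ_m = q·Λ_{m-1} ∪ {n ∈ ℕ₀ : n ≥ q·b_m} for m ≥ 2, where (b_m) satisfies q·b_m ≤ b_{m+1} and b₁ = 0. Then for each k with 1 ≤ k ≤ m-1, Λ_m has exactly b_{k+1} − q·b_k maximal intervals of gaps of length q^{m−k} − 1, and consequently, for N = ⌊m − log_q(ℓ+1)⌋ ≥ 1, n_ℓ = Σ_{k=1}^{N} (b_{k+1} − q b_k) = b_{N+1} + (1−q) Σ_{k=1}^{N} b_k. -/

import Mathlib

/-- Number of maximal intervals of consecutive gaps of `Λ` of length at least `ℓ`,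
counted via their starting points. -/
noncomputable def nGapIntervals (Λ : Set ℕ) (ℓ : ℕ) : ℕ :=
  Nat.card {s : ℕ | (∀ k < ℓ, s + k ∉ Λ) ∧ (s = 0 ∨ s - 1 ∈ Λ)}

/-- Number of maximal intervals of consecutive gaps of `Λ` of length exactly `L`. -/
noncomputable def nGapIntervalsExact (Λ : Set ℕ) (L : ℕ) : ℕ :=
  Nat.card {s : ℕ | (∀ k < L, s + k ∉ Λ) ∧ s + L ∈ Λ ∧ (s = 0 ∨ s - 1 ∈ Λ)}

/-- The inductive semigroups `Λ₁ = ℕ₀`, `Λ_m = q·Λ_{m-1} ∪ {n : n ≥ q·b_m}`. -/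
def inductiveSG (q : ℕ) (b : ℕ → ℕ) : ℕ → Set ℕ
  | 0 => Set.univ
  | 1 => Set.univ
  | (m + 2) => (fun n => q * n) '' inductiveSG q b (m + 1) ∪
      {n : ℕ | q * b (m + 2) ≤ n}

private lemma isg_mem_iff (q : ℕ) (hq : 1 ≤ q) (b : ℕ → ℕ) (hb1 : b 1 = 0) :
    ∀ m, 1 ≤ m → ∀ x : ℕ,
      x ∈ inductiveSG q b m ↔
        ∃ e j : ℕ, j + e = m ∧ 1 ≤ j ∧ q ^ e ∣ x ∧ q ^ (e + 1) * b j ≤ x := by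
  intro m hm
  induction m, hm using Nat.le_induction with
  | base =>
    intro x
    constructor
    · intro _
      exact ⟨0, 1, rfl, le_refl 1, one_dvd x, by simp [hb1]⟩
    · intro _; trivial
  | succ m hm ih =>
    intro x
    obtain ⟨p, rfl⟩ : ∃ p, m = p + 1 := ⟨m - 1, by omega⟩
    show x ∈ ((fun n => q * n) '' inductiveSG q b (p + 1) ∪ {n : ℕ | q * b (p + 2) ≤ n}) ↔ _
    constructor
    · rintro (⟨y, hy, rfl⟩ | hx)
      · obtain ⟨e, j, hje, hj, hdvd, hle⟩ := (ih y).mp hy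
        refine ⟨e + 1, j, by omega, hj, ?_, ?_⟩
        · rw [pow_succ']
          exact mul_dvd_mul_left q hdvd
        · calc q ^ (e + 1 + 1) * b j = q * (q ^ (e + 1) * b j) := by ring
            _ ≤ q * y := Nat.mul_le_mul_left q hle
      · exact ⟨0, p + 2, by omega, by omega, one_dvd x, by simpa using hx⟩
    · rintro ⟨e, j, hje, hj, hdvd, hle⟩
      rcases Nat.lt_or_ge j (p + 2) with hlt | hge
      · obtain ⟨e', rfl⟩ : ∃ e', e = e' + 1 := ⟨e - 1, by omega⟩
        have hqd : q ∣ x := dvd_trans (dvd_pow_self q (Nat.succ_ne_zero e')) hdvd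
        obtain ⟨y, rfl⟩ := hqd
        left
        refine ⟨y, (ih y).mpr ⟨e', j, by omega, hj, ?_, ?_⟩, rfl⟩
        · rw [pow_succ'] at hdvd
          exact (mul_dvd_mul_iff_left (show q ≠ 0 by omega)).mp hdvd
        · have h1 : q * (q ^ (e' + 1) * b j) ≤ q * y := by
            calc q * (q ^ (e' + 1) * b j) = q ^ (e' + 1 + 1) * b j := by ring
              _ ≤ q * y := hle
          exact Nat.le_of_mul_le_mul_left h1 (by omega)
      · have hj2 : j = p + 2 := by omega
        have he0 : e = 0 := by omega
        right
        subst hj2 he0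
        simpa using hle

private lemma isg_thr_mono (q : ℕ) (b : ℕ → ℕ)
    (hbmono : ∀ m : ℕ, 1 ≤ m → q * b m ≤ b (m + 1)) :
    ∀ d j e : ℕ, 1 ≤ j → q ^ (e + d + 1) * b j ≤ q ^ (e + 1) * b (j + d) := by
  intro d
  induction d with
  | zero => intro j e _; simp
  | succ d ih =>
    intro j e hj
    calc q ^ (e + (d + 1) + 1) * b j = q ^ (e + 1 + d + 1) * b j := by ring_nf
      _ ≤ q ^ (e + 1 + 1) * b (j + d) := ih j (e + 1) hj
      _ = q ^ (e + 1) * (q * b (j + d)) := by ring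
      _ ≤ q ^ (e + 1) * b (j + d + 1) := Nat.mul_le_mul_left _ (hbmono _ (by omega))

private lemma isg_mem_pow_mul (q : ℕ) (hq : 1 ≤ q) (b : ℕ → ℕ) (hb1 : b 1 = 0)
    (m e j t : ℕ) (hj : 1 ≤ j) (hje : j + e = m) (ht : q * b j ≤ t) :
    q ^ e * t ∈ inductiveSG q b m :=
  (isg_mem_iff q hq b hb1 m (by omega) _).mpr ⟨e, j, hje, hj, dvd_mul_right _ _, by
    calc q ^ (e + 1) * b j = q ^ e * (q * b j) := by ring
      _ ≤ q ^ e * t := Nat.mul_le_mul_left _ ht⟩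

private lemma isg_not_mem_mid (q : ℕ) (hq : 1 ≤ q) (b : ℕ → ℕ) (hb1 : b 1 = 0)
    (hbmono : ∀ m : ℕ, 1 ≤ m → q * b m ≤ b (m + 1))
    (m e j t r : ℕ) (hj : 1 ≤ j) (hje : j + e = m) (ht : t < b (j + 1))
    (hr0 : 0 < r) (hr : r < q ^ e) :
    q ^ e * t + r ∉ inductiveSG q b m := by
  intro hmem
  obtain ⟨e', j', hje', hj', hdvd, hle⟩ :=
    (isg_mem_iff q hq b hb1 m (by omega) _).mp hmem
  rcases Nat.lt_or_ge j' (j + 1) with hlt | hge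
  · have he : e ≤ e' := by omega
    have h1 : q ^ e ∣ q ^ e * t + r := dvd_trans (pow_dvd_pow q he) hdvd
    have h2 : q ^ e ∣ r := (Nat.dvd_add_right (dvd_mul_right _ _)).mp h1
    exact absurd (Nat.le_of_dvd hr0 h2) (by omega)
  · obtain ⟨d, rfl⟩ : ∃ d, j' = (j + 1) + d := ⟨j' - (j + 1), by omega⟩
    have hed : e = e' + d + 1 := by omega
    have h1 : q ^ (e' + d + 1) * b (j + 1) ≤ q ^ (e' + 1) * b (j + 1 + d) :=
      isg_thr_mono q b hbmono d (j + 1) e' (by omega)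
    have h2 : q ^ e * b (j + 1) ≤ q ^ e * t + r := by
      calc q ^ e * b (j + 1) = q ^ (e' + d + 1) * b (j + 1) := by rw [hed]
        _ ≤ q ^ (e' + 1) * b (j + 1 + d) := h1
        _ ≤ q ^ e * t + r := hle
    have h4 : q ^ e * (t + 1) ≤ q ^ e * b (j + 1) := Nat.mul_le_mul_left _ (by omega)
    rw [Nat.mul_succ] at h4
    omega

private lemma isg_run (q : ℕ) (hq : 1 ≤ q) (b : ℕ → ℕ) (hb1 : b 1 = 0)
    (m : ℕ) (hm : 1 ≤ m) (a : ℕ)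
    (ha : a ∈ inductiveSG q b m) (hna : a + 1 ∉ inductiveSG q b m) :
    ∃ e j t : ℕ, 1 ≤ j ∧ 1 ≤ e ∧ j + e = m ∧ a = q ^ e * t ∧
      q * b j ≤ t ∧ t < b (j + 1) := by
  classical
  set P : ℕ → Prop := fun k => 1 ≤ k ∧ ∃ e, k + e = m ∧ q ^ (e + 1) * b k ≤ a with hP
  obtain ⟨e0, j0, hje0, hj0, hdvd0, hle0⟩ := (isg_mem_iff q hq b hb1 m hm a).mp ha
  have hPj0 : P j0 := ⟨hj0, e0, hje0, hle0⟩
  have hPK : P (Nat.findGreatest P m) := Nat.findGreatest_spec (by omega) hPj0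
  obtain ⟨hK1, eK, hKe, hKle⟩ := hPK
  set K := Nat.findGreatest P m with hK
  have hj0K : j0 ≤ K := Nat.le_findGreatest (by omega) hPj0
  have hdvd : q ^ eK ∣ a := dvd_trans (pow_dvd_pow q (by omega)) hdvd0
  have heK : 1 ≤ eK := by
    by_contra h
    have he0 : eK = 0 := by omega
    refine hna ((isg_mem_iff q hq b hb1 m hm _).mpr ⟨0, m, by omega, by omega, one_dvd _, ?_⟩)
    have hKm : K = m := by omega
    rw [← hKm]
    subst he0
    simpa using Nat.le_succ_of_le hKle
  obtain ⟨t, rfl⟩ := hdvd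
  refine ⟨eK, K, t, hK1, heK, hKe, rfl, ?_, ?_⟩
  · have h1 : q ^ eK * (q * b K) ≤ q ^ eK * t := by
      calc q ^ eK * (q * b K) = q ^ (eK + 1) * b K := by ring
        _ ≤ q ^ eK * t := hKle
    exact Nat.le_of_mul_le_mul_left h1 (by positivity)
  · by_contra h
    push_neg at h
    have hPK1 : P (K + 1) := by
      refine ⟨by omega, eK - 1, by omega, ?_⟩
      have heq : eK - 1 + 1 = eK := by omega
      rw [heq]
      exact Nat.mul_le_mul_left _ h
    exact Nat.findGreatest_is_greatest (n := m) (P := P) (by omega) (by omega) hPK1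
private lemma isg_qe_two (q : ℕ) (hq : 2 ≤ q) {e : ℕ} (he : 1 ≤ e) : 2 ≤ q ^ e :=
  le_trans hq (by calc q = q ^ 1 := (pow_one q).symm
    _ ≤ q ^ e := Nat.pow_le_pow_right (by omega) he)

private lemma isg_zero_mem (q : ℕ) (hq : 1 ≤ q) (b : ℕ → ℕ) (hb1 : b 1 = 0)
    (m : ℕ) (hm : 1 ≤ m) : 0 ∈ inductiveSG q b m := by
  have := isg_mem_pow_mul q hq b hb1 m (m - 1) 1 0 (le_refl 1) (by omega) (by simp [hb1])
  simpa using this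

/-- The set of starting points of maximal gap intervals of length exactly `q^e - 1`. -/
private lemma isg_exact_set (q : ℕ) (hq : 2 ≤ q) (b : ℕ → ℕ) (hb1 : b 1 = 0)
    (hbmono : ∀ m : ℕ, 1 ≤ m → q * b m ≤ b (m + 1))
    (m e j : ℕ) (hj : 1 ≤ j) (he : 1 ≤ e) (hje : j + e = m) :
    {s : ℕ | (∀ r < q ^ e - 1, s + r ∉ inductiveSG q b m) ∧
        s + (q ^ e - 1) ∈ inductiveSG q b m ∧
        (s = 0 ∨ s - 1 ∈ inductiveSG q b m)} =
      ↑((Finset.Ico (q * b j) (b (j + 1))).image (fun t => q ^ e * t + 1)) := by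
  have hq1 : 1 ≤ q := by omega
  have h2 : 2 ≤ q ^ e := isg_qe_two q hq he
  ext s
  simp only [Set.mem_setOf_eq, Finset.coe_image, Set.mem_image, Finset.mem_coe,
    Finset.mem_Ico]
  constructor
  · rintro ⟨hmid, hend, hleft⟩
    have h0 : (0 : ℕ) ∈ inductiveSG q b m := isg_zero_mem q hq1 b hb1 m (by omega)
    have hs0 : s ≠ 0 := by
      intro h
      exact hmid 0 (by omega) (by simpa [h] using h0)
    have ha : s - 1 ∈ inductiveSG q b m := hleft.resolve_left hs0
    have hna : (s - 1) + 1 ∉ inductiveSG q b m := by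
      have := hmid 0 (by omega)
      simpa [show s - 1 + 1 = s + 0 by omega] using this
    obtain ⟨e', j', t, hj', he', hje', hat, ht1, ht2⟩ :=
      isg_run q hq1 b hb1 m (by omega) (s - 1) ha hna
    have hs : s = q ^ e' * t + 1 := by omega
    have h2' : 2 ≤ q ^ e' := isg_qe_two q hq he'
    have hee : e' = e := by
      rcases lt_trichotomy e' e with h | h | h
      · exfalso
        have hmem : q ^ e' * (t + 1) ∈ inductiveSG q b m :=
          isg_mem_pow_mul q hq1 b hb1 m e' j' (t + 1) hj' hje' (by omega)
        have hlt : q ^ e' - 1 < q ^ e - 1 := by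
          have : q ^ e' < q ^ e := Nat.pow_lt_pow_right (by omega) h
          omega
        have harith : s + (q ^ e' - 1) = q ^ e' * (t + 1) := by
          rw [Nat.mul_succ]; omega
        exact hmid (q ^ e' - 1) hlt (by rw [harith]; exact hmem)
      · exact h
      · exfalso
        have hlt : q ^ e < q ^ e' := Nat.pow_lt_pow_right (by omega) h
        have harith : s + (q ^ e - 1) = q ^ e' * t + q ^ e := by omega
        exact isg_not_mem_mid q hq1 b hb1 hbmono m e' j' t (q ^ e) hj' hje' ht2
          (by omega) hlt (by rw [← harith]; exact hend)
    subst hee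
    have hjj : j' = j := by omega
    subst hjj
    exact ⟨t, ⟨ht1, ht2⟩, hs.symm⟩
  · rintro ⟨t, ⟨ht1, ht2⟩, rfl⟩
    refine ⟨?_, ?_, Or.inr ?_⟩
    · intro r hr
      have harith : q ^ e * t + 1 + r = q ^ e * t + (r + 1) := by omega
      rw [harith]
      exact isg_not_mem_mid q hq1 b hb1 hbmono m e j t (r + 1) hj hje ht2 (by omega) (by omega)
    · have harith : q ^ e * t + 1 + (q ^ e - 1) = q ^ e * (t + 1) := by
        rw [Nat.mul_succ]; omega
      rw [harith]
      exact isg_mem_pow_mul q hq1 b hb1 m e j (t + 1) hj hje (by omega)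
    · have harith : q ^ e * t + 1 - 1 = q ^ e * t := by omega
      rw [harith]
      exact isg_mem_pow_mul q hq1 b hb1 m e j t hj hje ht1

private lemma isg_exact_count (q : ℕ) (hq : 2 ≤ q) (b : ℕ → ℕ) (hb1 : b 1 = 0)
    (hbmono : ∀ m : ℕ, 1 ≤ m → q * b m ≤ b (m + 1))
    (m e j : ℕ) (hj : 1 ≤ j) (he : 1 ≤ e) (hje : j + e = m) :
    nGapIntervalsExact (inductiveSG q b m) (q ^ e - 1) = b (j + 1) - q * b j := by
  have hinj : Function.Injective (fun t : ℕ => q ^ e * t + 1) := by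
    intro a a' h
    simp only [Nat.add_right_cancel_iff] at h
    exact Nat.eq_of_mul_eq_mul_left (by positivity) h
  rw [nGapIntervalsExact, Nat.card_coe_set_eq,
    isg_exact_set q hq b hb1 hbmono m e j hj he hje, Set.ncard_coe_finset,
    Finset.card_image_of_injective _ hinj, Nat.card_Ico]
private lemma isg_ne (q : ℕ) (hq : 2 ≤ q) (b : ℕ → ℕ) (hb1 : b 1 = 0)
    (hbmono : ∀ m : ℕ, 1 ≤ m → q * b m ≤ b (m + 1))
    (m e j t e' j' t' : ℕ) (hj : 1 ≤ j) (hj' : 1 ≤ j') (hje : j + e = m)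
    (hje' : j' + e' = m) (hee : e < e') (ht : q * b j ≤ t) (ht' : t' < b (j' + 1)) :
    q ^ e * t + 1 ≠ q ^ e' * t' + 1 := by
  intro h
  have h0 : q ^ e * t = q ^ e' * t' := by omega
  have hmem : q ^ e * (t + 1) ∈ inductiveSG q b m :=
    isg_mem_pow_mul q (by omega) b hb1 m e j (t + 1) hj hje (by omega)
  have harith : q ^ e * (t + 1) = q ^ e' * t' + q ^ e := by rw [Nat.mul_succ]; omega
  have hlt : q ^ e < q ^ e' := Nat.pow_lt_pow_right (by omega) hee
  exact isg_not_mem_mid q (by omega) b hb1 hbmono m e' j' t' (q ^ e) hj' hje' ht'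
    (by positivity) hlt (by rw [← harith]; exact hmem)

private lemma isg_ge_set (q : ℕ) (hq : 2 ≤ q) (b : ℕ → ℕ) (hb1 : b 1 = 0)
    (hbmono : ∀ m : ℕ, 1 ≤ m → q * b m ≤ b (m + 1))
    (m ℓ N : ℕ) (hm : 1 ≤ m) (hℓ : 1 ≤ ℓ)
    (hN : N = m - Nat.clog q (ℓ + 1)) (hN1 : 1 ≤ N) :
    {s : ℕ | (∀ r < ℓ, s + r ∉ inductiveSG q b m) ∧
        (s = 0 ∨ s - 1 ∈ inductiveSG q b m)} =
      ↑((Finset.Icc 1 N).biUnion fun k =>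
        (Finset.Ico (q * b k) (b (k + 1))).image fun t => q ^ (m - k) * t + 1) := by
  have hq1 : 1 ≤ q := by omega
  have hc1 : 1 ≤ Nat.clog q (ℓ + 1) := Nat.clog_pos (by omega) (by omega)
  ext s
  simp only [Set.mem_setOf_eq, Finset.coe_biUnion, Finset.mem_coe, Set.mem_iUnion,
    Finset.mem_image, Finset.mem_Icc, Finset.mem_Ico, exists_prop]
  constructor
  · rintro ⟨hmid, hleft⟩
    have h0 : (0 : ℕ) ∈ inductiveSG q b m := isg_zero_mem q hq1 b hb1 m hm
    have hs0 : s ≠ 0 := by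
      intro h
      exact hmid 0 (by omega) (by simpa [h] using h0)
    have ha : s - 1 ∈ inductiveSG q b m := hleft.resolve_left hs0
    have hna : (s - 1) + 1 ∉ inductiveSG q b m := by
      have := hmid 0 (by omega)
      simpa [show s - 1 + 1 = s + 0 by omega] using this
    obtain ⟨e', j', t, hj', he', hje', hat, ht1, ht2⟩ :=
      isg_run q hq1 b hb1 m hm (s - 1) ha hna
    have h2' : 2 ≤ q ^ e' := isg_qe_two q hq he'
    have hs : s = q ^ e' * t + 1 := by omega
    have hmem : q ^ e' * (t + 1) ∈ inductiveSG q b m :=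
      isg_mem_pow_mul q hq1 b hb1 m e' j' (t + 1) hj' hje' (by omega)
    have hge : ℓ + 1 ≤ q ^ e' := by
      by_contra h
      push_neg at h
      have harith : s + (q ^ e' - 1) = q ^ e' * (t + 1) := by rw [Nat.mul_succ]; omega
      exact hmid (q ^ e' - 1) (by omega) (by rw [harith]; exact hmem)
    have hce : Nat.clog q (ℓ + 1) ≤ e' := (Nat.clog_le_iff_le_pow (by omega)).mpr hge
    refine ⟨j', ⟨hj', by omega⟩, t, ⟨ht1, ht2⟩, ?_⟩
    have hme : m - j' = e' := by omega
    rw [hme]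
    exact hs.symm
  · rintro ⟨k, ⟨hk1, hkN⟩, t, ⟨ht1, ht2⟩, rfl⟩
    have hke : k + (m - k) = m := by omega
    have hce : Nat.clog q (ℓ + 1) ≤ m - k := by omega
    have hle : ℓ + 1 ≤ q ^ (m - k) :=
      le_trans (Nat.le_pow_clog (by omega) (ℓ + 1)) (Nat.pow_le_pow_right hq1 hce)
    refine ⟨?_, Or.inr ?_⟩
    · intro r hr
      have harith : q ^ (m - k) * t + 1 + r = q ^ (m - k) * t + (r + 1) := by omega
      rw [harith]
      exact isg_not_mem_mid q hq1 b hb1 hbmono m (m - k) k t (r + 1) hk1 hke ht2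
        (by omega) (by omega)
    · have harith : q ^ (m - k) * t + 1 - 1 = q ^ (m - k) * t := by omega
      rw [harith]
      exact isg_mem_pow_mul q hq1 b hb1 m (m - k) k t hk1 hke ht1

private lemma isg_ge_count (q : ℕ) (hq : 2 ≤ q) (b : ℕ → ℕ) (hb1 : b 1 = 0)
    (hbmono : ∀ m : ℕ, 1 ≤ m → q * b m ≤ b (m + 1))
    (m ℓ N : ℕ) (hm : 1 ≤ m) (hℓ : 1 ≤ ℓ)
    (hN : N = m - Nat.clog q (ℓ + 1)) (hN1 : 1 ≤ N) :
    nGapIntervals (inductiveSG q b m) ℓ =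
      ∑ k ∈ Finset.Icc 1 N, (b (k + 1) - q * b k) := by
  have hc1 : 1 ≤ Nat.clog q (ℓ + 1) := Nat.clog_pos (by omega) (by omega)
  have hdisj : ∀ k ∈ Finset.Icc 1 N, ∀ k' ∈ Finset.Icc 1 N, k ≠ k' →
      Disjoint ((Finset.Ico (q * b k) (b (k + 1))).image fun t => q ^ (m - k) * t + 1)
        ((Finset.Ico (q * b k') (b (k' + 1))).image fun t => q ^ (m - k') * t + 1) := by
    intro k hk k' hk' hne
    rw [Finset.mem_Icc] at hk hk'
    rw [Finset.disjoint_left]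
    rintro s hs hs'
    simp only [Finset.mem_image, Finset.mem_Ico] at hs hs'
    obtain ⟨t, ⟨ht1, ht2⟩, hts⟩ := hs
    obtain ⟨t', ⟨ht1', ht2'⟩, hts'⟩ := hs'
    have hke : k + (m - k) = m := by omega
    have hke' : k' + (m - k') = m := by omega
    rcases lt_trichotomy (m - k) (m - k') with h | h | h
    · exact isg_ne q hq b hb1 hbmono m (m - k) k t (m - k') k' t' hk.1 hk'.1 hke hke'
        h ht1 ht2' (hts.trans hts'.symm)
    · omega
    · exact isg_ne q hq b hb1 hbmono m (m - k') k' t' (m - k) k t hk'.1 hk.1 hke' hke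
        h ht1' ht2 (hts'.trans hts.symm)
  rw [nGapIntervals, Nat.card_coe_set_eq,
    isg_ge_set q hq b hb1 hbmono m ℓ N hm hℓ hN hN1, Set.ncard_coe_finset,
    Finset.card_biUnion hdisj]
  refine Finset.sum_congr rfl fun k hk => ?_
  have hinj : Function.Injective (fun t : ℕ => q ^ (m - k) * t + 1) := by
    intro a a' h
    simp only [Nat.add_right_cancel_iff] at h
    exact Nat.eq_of_mul_eq_mul_left (by positivity) h
  rw [Finset.card_image_of_injective _ hinj, Nat.card_Ico]

private lemma isg_telescope (q : ℤ) (b : ℕ → ℕ) (hb1 : b 1 = 0) (N : ℕ) :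
    ∑ k ∈ Finset.Icc 1 N, ((b (k + 1) : ℤ) - q * b k) =
      (b (N + 1) : ℤ) + (1 - q) * ∑ k ∈ Finset.Icc 1 N, (b k : ℤ) := by
  induction N with
  | zero =>
    have h : Finset.Icc 1 0 = (∅ : Finset ℕ) := Finset.Icc_eq_empty (by omega)
    simp [h, hb1]
  | succ N ih =>
    rw [Finset.sum_Icc_succ_top (by omega), Finset.sum_Icc_succ_top (by omega), ih]
    ring

theorem inductive_semigroup_gap_intervals (q : ℕ) (hq : 2 ≤ q) (b : ℕ → ℕ)
    (hb1 : b 1 = 0) (hbmono : ∀ m : ℕ, 1 ≤ m → q * b m ≤ b (m + 1))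
    (m : ℕ) (hm : 1 ≤ m) :
    (∀ k : ℕ, 1 ≤ k → k ≤ m - 1 →
        nGapIntervalsExact (inductiveSG q b m) (q ^ (m - k) - 1) =
          b (k + 1) - q * b k) ∧
      ∀ ℓ N : ℕ, 1 ≤ ℓ → N = m - Nat.clog q (ℓ + 1) → 1 ≤ N →
        (nGapIntervals (inductiveSG q b m) ℓ : ℤ) =
            ∑ k ∈ Finset.Icc 1 N, ((b (k + 1) : ℤ) - q * b k) ∧
          (nGapIntervals (inductiveSG q b m) ℓ : ℤ) =
            (b (N + 1) : ℤ) + (1 - (q : ℤ)) * ∑ k ∈ Finset.Icc 1 N, (b k : ℤ) := by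
  constructor
  · intro k hk1 hk2
    exact isg_exact_count q hq b hb1 hbmono m (m - k) k hk1 (by omega) (by omega)
  · intro ℓ N hℓ hN hN1
    have hnat := isg_ge_count q hq b hb1 hbmono m ℓ N hm hℓ hN hN1
    have hfirst : (nGapIntervals (inductiveSG q b m) ℓ : ℤ) =
        ∑ k ∈ Finset.Icc 1 N, ((b (k + 1) : ℤ) - q * b k) := by
      rw [hnat, Nat.cast_sum]
      refine Finset.sum_congr rfl fun k hk => ?_
      have h1 : 1 ≤ k := (Finset.mem_Icc.mp hk).1
      rw [Nat.cast_sub (hbmono k h1), Nat.cast_mul]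
    exact ⟨hfirst, by rw [hfirst, isg_telescope (q : ℤ) b hb1 N]⟩
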